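/- There exist n S-disjoint edges in the colored union graph of a structured switched linear system if and only if the colored union graph contains no S-dilation. -/

import Mathlib

/-- Edge relation of the graph `G_i` of subsystem `i`, on vertices `Fin r ⊕ Fin n`
(inputs on the left, states on the right). -/
def subEdge {m n r : ℕ}
    (PA : Fin m → Fin n → Fin n → Prop) (PB : Fin m → Fin n → Fin r → Prop)
    (i : Fin m) (v w : Fin r ⊕ Fin n) : Prop :=
  match v, w with
  | Sum.inl j, Sum.inr k => PB i k j
  | Sum.inr l, Sum.inr k => PA i k l
  | _, _ => False

/-- Edge relation of the union graph `G`. -/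
def unionEdge {m n r : ℕ}
    (PA : Fin m → Fin n → Fin n → Prop) (PB : Fin m → Fin n → Fin r → Prop)
    (v w : Fin r ⊕ Fin n) : Prop :=
  ∃ i, subEdge PA PB i v w

/-- A state vertex is accessible if some directed path in the union graph starting at an
input vertex reaches it. -/
def Accessible {m n r : ℕ}
    (PA : Fin m → Fin n → Fin n → Prop) (PB : Fin m → Fin n → Fin r → Prop)
    (k : Fin n) : Prop :=
  ∃ j : Fin r, Relation.ReflTransGen (unionEdge PA PB) (Sum.inl j) (Sum.inr k)

/-- The colored union graph contains an `S`-dilation: a nonempty set `S` of state vertices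
with `Σ_{i=1}^m |T_i(S)| < |S|`, where `T_i(S)` is the set of vertices with an edge into
some vertex of `S` in the subsystem graph `G_i`. -/
def HasSDilation {m n r : ℕ}
    (PA : Fin m → Fin n → Fin n → Prop) (PB : Fin m → Fin n → Fin r → Prop) : Prop :=
  ∃ S : Set (Fin n), S.Nonempty ∧
    (∑ i : Fin m,
      ({v : Fin r ⊕ Fin n | ∃ k ∈ S, subEdge PA PB i v (Sum.inr k)}).ncard) < S.ncard

/-- There exist `k` `S`-disjoint (colored) edges in the colored union graph: edges
`e_t = (v t, v' t)` of the subsystem graphs `G_{c t}` with pairwise distinct end vertices,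
such that any two distinct edges with the same begin vertex carry distinct subsystem
indices. -/
def HasSDisjointEdges {m n r : ℕ}
    (PA : Fin m → Fin n → Fin n → Prop) (PB : Fin m → Fin n → Fin r → Prop)
    (k : ℕ) : Prop :=
  ∃ (v : Fin k → Fin r ⊕ Fin n) (v' : Fin k → Fin n) (c : Fin k → Fin m),
    (∀ t, subEdge PA PB (c t) (v t) (Sum.inr (v' t))) ∧
    Function.Injective v' ∧
    (∀ s t, s ≠ t → v s = v t → c s ≠ c t)


open Classical in
/-- Counting lemma: the colored neighborhood set splits as a sum over colors. -/
lemma colored_count {m n r : ℕ}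
    (PA : Fin m → Fin n → Fin n → Prop) (PB : Fin m → Fin n → Fin r → Prop)
    (S : Set (Fin n)) :
    ({p : Fin m × (Fin r ⊕ Fin n) | ∃ k ∈ S, subEdge PA PB p.1 p.2 (Sum.inr k)}).ncard
      = ∑ i : Fin m, ({v : Fin r ⊕ Fin n | ∃ k ∈ S, subEdge PA PB i v (Sum.inr k)}).ncard := by
  classical
  have e := Equiv.subtypeProdEquivSigmaSubtype
    (fun (i : Fin m) (v : Fin r ⊕ Fin n) => ∃ k ∈ S, subEdge PA PB i v (Sum.inr k))
  have h1 : ({p : Fin m × (Fin r ⊕ Fin n) | ∃ k ∈ S, subEdge PA PB p.1 p.2 (Sum.inr k)}).ncard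
      = Fintype.card {p : Fin m × (Fin r ⊕ Fin n) // ∃ k ∈ S, subEdge PA PB p.1 p.2 (Sum.inr k)} := by
    rw [← Nat.card_coe_set_eq, Nat.card_eq_fintype_card]
    rfl
  have h2 : ∀ i : Fin m, ({v : Fin r ⊕ Fin n | ∃ k ∈ S, subEdge PA PB i v (Sum.inr k)}).ncard
      = Fintype.card {v : Fin r ⊕ Fin n // ∃ k ∈ S, subEdge PA PB i v (Sum.inr k)} := by
    intro i
    rw [← Nat.card_coe_set_eq, Nat.card_eq_fintype_card]
    rfl
  rw [h1, Fintype.card_congr e, Fintype.card_sigma]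
  exact Finset.sum_congr rfl fun i _ => (h2 i).symm

lemma sdisjoint_iff_matching {m n r : ℕ}
    (PA : Fin m → Fin n → Fin n → Prop) (PB : Fin m → Fin n → Fin r → Prop) :
    HasSDisjointEdges PA PB n ↔
      ∃ f : Fin n → Fin m × (Fin r ⊕ Fin n), Function.Injective f ∧
        ∀ k, subEdge PA PB (f k).1 (f k).2 (Sum.inr k) := by
  constructor
  · rintro ⟨v, v', c, hrel, hinj, hc⟩
    have hbij : Function.Bijective v' := Finite.injective_iff_bijective.mp hinj
    let σ := Equiv.ofBijective v' hbij
    refine ⟨fun k => (c (σ.symm k), v (σ.symm k)), ?_, ?_⟩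
    · intro k k' h
      have h1 : c (σ.symm k) = c (σ.symm k') := congrArg Prod.fst h
      have h2 : v (σ.symm k) = v (σ.symm k') := congrArg Prod.snd h
      by_contra hne
      have hst : σ.symm k ≠ σ.symm k' := fun h => hne (by
        have := congrArg σ h; simpa using this)
      exact hc _ _ hst h2 h1
    · intro k
      have := hrel (σ.symm k)
      have hk : v' (σ.symm k) = k := σ.apply_symm_apply k
      rwa [hk] at this
  · rintro ⟨f, hinj, hrel⟩
    refine ⟨fun t => (f t).2, id, fun t => (f t).1, hrel, fun a b h => h, ?_⟩
    intro s t hst hv hcc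
    exact hst (hinj (Prod.ext hcc hv))

/-- There exist `n` `S`-disjoint edges in the colored union graph iff the
colored union graph contains no `S`-dilation. -/
theorem sDisjointEdges_iff_no_sDilation
    {m n r : ℕ} (PA : Fin m → Fin n → Fin n → Prop) (PB : Fin m → Fin n → Fin r → Prop) :
    HasSDisjointEdges PA PB n ↔ ¬ HasSDilation PA PB := by
  classical
  rw [sdisjoint_iff_matching]
  rw [← Fintype.all_card_le_filter_rel_iff_exists_injective
    (fun (k : Fin n) (p : Fin m × (Fin r ⊕ Fin n)) => subEdge PA PB p.1 p.2 (Sum.inr k))]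
  constructor
  · intro hall ⟨S, hSne, hlt⟩
    rw [← colored_count] at hlt
    have hfin : S.Finite := S.toFinite
    have := hall hfin.toFinset
    have hA : (hfin.toFinset).card = S.ncard := (Set.ncard_eq_toFinset_card S hfin).symm
    have hB : ({p : Fin m × (Fin r ⊕ Fin n) | ∃ k ∈ S, subEdge PA PB p.1 p.2 (Sum.inr k)}).ncard
        = Finset.card {p : Fin m × (Fin r ⊕ Fin n) |
            ∃ k ∈ hfin.toFinset, subEdge PA PB p.1 p.2 (Sum.inr k)} := by
      rw [Set.ncard_eq_toFinset_card']
      congr 1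
      ext p
      simp
    rw [← hA, hB] at hlt
    exact absurd this (not_le.mpr (by convert hlt using 3; rfl))
  · intro hnd A
    by_cases hA : A.Nonempty
    · by_contra hlt
      push_neg at hlt
      apply hnd
      refine ⟨(A : Set (Fin n)), by simpa using hA, ?_⟩
      rw [← colored_count]
      have hA1 : ((A : Set (Fin n))).ncard = A.card := Set.ncard_coe_finset A
      have hB : ({p : Fin m × (Fin r ⊕ Fin n) | ∃ k ∈ (A : Set (Fin n)),
            subEdge PA PB p.1 p.2 (Sum.inr k)}).ncard
          = Finset.card {p : Fin m × (Fin r ⊕ Fin n) |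
              ∃ k ∈ A, subEdge PA PB p.1 p.2 (Sum.inr k)} := by
        rw [Set.ncard_eq_toFinset_card']
        congr 1
        ext p
        simp
      rw [hA1, hB]
      convert hlt using 3
      rfl
    · simp [Finset.not_nonempty_iff_eq_empty.mp hA]
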